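/- arXiv:2303.10586 — 2 statements merged into one kernel-verified Lean document; each statement's English description precedes it below -/
import Mathlib

section
/- Let R be a ring and let C be an additive symmetric monoidal category, i.e., a symmetric monoidal category enriched over commutative monoids (each hom-set has a sum + and zero map 0) such that composition and the monoidal product ⊗ preserve sums and zero maps. Suppose given a family of endofunctors !_r of C indexed by r ∈ R, a natural transformation w : !_0 A → I (I the monoidal unit), and a family of natural transformations ∂_r : !_r A ⊗ A → !_{r+1} A, where naturality of ∂ means (!_r(f) ⊗ f) ; ∂_r = ∂_r ; !_{r+1}(f) for every map f : A → B. Then the composite ∂_{-1} ; w : !_{-1} A ⊗ A → I is the zero map (the Constant Rule). -/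
open CategoryTheory MonoidalCategory

universe v u

/-- An additive symmetric monoidal category: homs are commutative monoids and
composition and the monoidal product preserve sums and zero maps. -/
class AdditiveMonoidal (C : Type u) [Category.{v} C] [MonoidalCategory C]
    [∀ X Y : C, AddCommMonoid (X ⟶ Y)] : Prop where
  add_comp : ∀ {X Y Z : C} (f g : X ⟶ Y) (h : Y ⟶ Z), (f + g) ≫ h = f ≫ h + g ≫ h
  comp_add : ∀ {X Y Z : C} (f : X ⟶ Y) (g h : Y ⟶ Z), f ≫ (g + h) = f ≫ g + f ≫ h
  zero_comp : ∀ {X Y Z : C} (g : Y ⟶ Z), (0 : X ⟶ Y) ≫ g = 0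
  comp_zero : ∀ {X Y Z : C} (f : X ⟶ Y), f ≫ (0 : Y ⟶ Z) = 0
  add_tensor : ∀ {X Y Z W : C} (f g : X ⟶ Y) (h : Z ⟶ W), (f + g) ⊗ₘ h = f ⊗ₘ h + g ⊗ₘ h
  tensor_add : ∀ {X Y Z W : C} (f : X ⟶ Y) (g h : Z ⟶ W), f ⊗ₘ (g + h) = f ⊗ₘ g + f ⊗ₘ h
  zero_tensor : ∀ {X Y Z W : C} (h : Z ⟶ W), (0 : X ⟶ Y) ⊗ₘ h = 0
  tensor_zero : ∀ {X Y Z W : C} (f : X ⟶ Y), f ⊗ₘ (0 : Z ⟶ W) = 0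

/-- The canonical identification `!_r A ⟶ !_s A` coming from an equality `r = s` of grades. -/
def bc {R : Type} {C : Type u} [Category.{v} C] (bang : R → C ⥤ C) {r s : R} (h : r = s)
    (A : C) : (bang r).obj A ⟶ (bang s).obj A :=
  eqToHom (congrArg (fun t => (bang t).obj A) h)

/-- **The Constant Rule.** If `R` is a ring then, in an additive symmetric monoidal
category equipped with a family of endofunctors `!_r` indexed by `r ∈ R`, a natural
transformation `w : !_0 A ⟶ I` and a family of natural transformations
`∂_r : !_r A ⊗ A ⟶ !_{r+1} A`, the composite `∂_{-1} ; w : !_{-1} A ⊗ A ⟶ I`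
is the zero map. -/
theorem constant_rule
    {R : Type} [Ring R]
    {C : Type u} [Category.{v} C] [MonoidalCategory C] [SymmetricCategory C]
    [∀ X Y : C, AddCommMonoid (X ⟶ Y)] [AdditiveMonoidal C]
    (bang : R → C ⥤ C)
    (w : ∀ A : C, (bang 0).obj A ⟶ 𝟙_ C)
    (w_natural : ∀ {A B : C} (f : A ⟶ B), (bang 0).map f ≫ w B = w A)
    (D : ∀ (r : R) (A : C), (bang r).obj A ⊗ A ⟶ (bang (r + 1)).obj A)
    (D_natural : ∀ (r : R) {A B : C} (f : A ⟶ B),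
      ((bang r).map f ⊗ₘ f) ≫ D r B = D r A ≫ (bang (r + 1)).map f)
    (A : C) :
    D (-1) A ≫ bc bang (neg_add_cancel (1 : R)) A ≫ w A = 0 := by
  have key : ∀ (s : R) (h : (-1 : R) + 1 = s) (w0 : (bang s).obj A ⟶ 𝟙_ C)
      (hw : (bang s).map (0 : A ⟶ A) ≫ w0 = w0),
      D (-1) A ≫ bc bang h A ≫ w0 = 0 := by
    intro s h w0 hw
    subst h
    simp only [bc, eqToHom_refl, Category.id_comp]
    rw [← hw, ← Category.assoc, ← D_natural, AdditiveMonoidal.tensor_zero,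
      AdditiveMonoidal.zero_comp, AdditiveMonoidal.zero_comp]
  exact key 0 (neg_add_cancel 1) (w A) (w_natural 0)
end

section
/- Let X be a type and n ∈ ℕ, and write M_n X for the set of multisets over X of cardinality n. Define the relation ε_n ⊆ M_n X × (Fin n → X) by (m, x) ∈ ε_n iff m equals the multiset {x(0), …, x(n−1)} of values of x. For a permutation τ of Fin n, let τ̂ ⊆ (Fin n → X) × (Fin n → X) be its graph relation, (x, y) ∈ τ̂ iff y = x ∘ τ⁻¹. Then: (a) ε_n ; τ̂ = ε_n for every permutation τ (where (m,y) ∈ ε_n ; τ̂ iff there exists x with (m,x) ∈ ε_n and (x,y) ∈ τ̂); and (b) for every type Z and every relation S ⊆ Z × (Fin n → X) satisfying S ; τ̂ = S for all permutations τ of Fin n, there exists a unique relation T ⊆ Z × M_n X with T ; ε_n = S. -/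
/-- Composition of relations, written diagrammatically: `(a, c) ∈ S ; T` iff there is
`b` with `(a, b) ∈ S` and `(b, c) ∈ T`. -/
def relComp {A B C : Type*} (S : A → B → Prop) (T : B → C → Prop) : A → C → Prop :=
  fun a c => ∃ b, S a b ∧ T b c

/-- The relation `ε_n ⊆ M_n X × (Fin n → X)` relating a multiset of cardinality `n` to
each tuple enumerating it. -/
def epsRel (X : Type*) (n : ℕ) :
    {m : Multiset X // Multiset.card m = n} → (Fin n → X) → Prop :=
  fun m x => (m : Multiset X) = (List.ofFn x : Multiset X)

/-- The graph relation of the permutation `τ` acting on tuples: `(x, y) ∈ τ̂` iff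
`y = x ∘ τ⁻¹`. -/
def permRel {X : Type*} {n : ℕ} (τ : Equiv.Perm (Fin n)) :
    (Fin n → X) → (Fin n → X) → Prop :=
  fun x y => y = x ∘ ⇑τ⁻¹

lemma multiset_ofFn_comp_perm {X : Type*} {n : ℕ} (σ : Equiv.Perm (Fin n)) (x : Fin n → X) :
    (List.ofFn (x ∘ σ) : Multiset X) = (List.ofFn x : Multiset X) :=
  Multiset.coe_eq_coe.2 (σ.ofFn_comp_perm x)

lemma finRange_succ_cons {n : ℕ} (j : Fin (n + 1)) :
    ((List.finRange (n + 1) : Multiset (Fin (n + 1)))) =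
      j ::ₘ ((List.finRange n : Multiset (Fin n)).map j.succAbove) := by
  have nd1 : ((List.finRange (n + 1) : Multiset (Fin (n + 1)))).Nodup :=
    Multiset.coe_nodup.2 (List.nodup_finRange _)
  have nd2 : (j ::ₘ ((List.finRange n : Multiset (Fin n))).map j.succAbove).Nodup := by
    refine Multiset.nodup_cons.2 ⟨?_, ?_⟩
    · simp only [Multiset.mem_map]
      rintro ⟨i, -, hi⟩
      exact j.succAbove_ne i hi
    · exact Multiset.Nodup.map (Fin.succAbove_right_injective)
        (Multiset.coe_nodup.2 (List.nodup_finRange _))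
  refine (Multiset.Nodup.ext nd1 nd2).2 ?_
  · intro k
    simp only [Multiset.mem_coe, List.mem_finRange, true_iff, Multiset.mem_cons,
      Multiset.mem_map]
    rcases eq_or_ne k j with h | h
    · exact Or.inl h
    · obtain ⟨i, hi⟩ := (j.exists_succAbove_eq_iff).2 h
      exact Or.inr ⟨i, by simp, hi⟩

lemma multiset_ofFn_eq_cons {X : Type*} {n : ℕ} (y : Fin (n + 1) → X) (j : Fin (n + 1)) :
    (List.ofFn y : Multiset X) = y j ::ₘ (List.ofFn (y ∘ j.succAbove) : Multiset X) := by
  have h1 : (List.ofFn y : Multiset X)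
      = ((List.finRange (n + 1) : Multiset (Fin (n + 1)))).map y := by
    rw [List.ofFn_eq_map]; rfl
  have h2 : (List.ofFn (y ∘ j.succAbove) : Multiset X)
      = ((List.finRange n : Multiset (Fin n))).map (y ∘ j.succAbove) := by
    rw [List.ofFn_eq_map]; rfl
  rw [h1, h2, finRange_succ_cons j, Multiset.map_cons, Multiset.map_map]

/-- Tuples with equal multisets of values differ by a permutation. -/
lemma exists_perm_of_multiset_eq {X : Type*} :
    ∀ {n : ℕ} (x y : Fin n → X), (List.ofFn x : Multiset X) = (List.ofFn y : Multiset X) →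
      ∃ σ : Equiv.Perm (Fin n), x = y ∘ σ := by
  intro n
  induction n with
  | zero => exact fun x y _ => ⟨1, funext fun i => i.elim0⟩
  | succ n ih =>
    intro x y h
    have hx0 : x 0 ∈ (List.ofFn y : Multiset X) := by
      rw [← h]
      simp [List.mem_ofFn]
    simp only [Multiset.mem_coe, List.mem_ofFn, Set.mem_range] at hx0
    obtain ⟨j, hj⟩ := hx0
    have hx : (List.ofFn x : Multiset X) = x 0 ::ₘ (List.ofFn (x ∘ Fin.succ) : Multiset X) := by
      rw [List.ofFn_succ]; rfl
    have hy := multiset_ofFn_eq_cons y j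
    rw [hx, hy, hj] at h
    have htail : (List.ofFn (x ∘ Fin.succ) : Multiset X)
        = (List.ofFn (y ∘ j.succAbove) : Multiset X) :=
      (Multiset.cons_inj_right _).1 h
    obtain ⟨σ', hσ'⟩ := ih (x ∘ Fin.succ) (y ∘ j.succAbove) htail
    refine ⟨(finSuccEquiv' 0).trans ((Equiv.optionCongr σ').trans (finSuccEquiv' j).symm), ?_⟩
    funext k
    refine Fin.cases ?_ ?_ k
    · simp only [Function.comp_apply, Equiv.trans_apply, finSuccEquiv'_at,
        Equiv.optionCongr_apply, Option.map_none, finSuccEquiv'_symm_none]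
      exact hj.symm
    · intro i
      have h1 : (finSuccEquiv' (0 : Fin (n + 1))) i.succ = some i := by
        rw [← Fin.zero_succAbove, finSuccEquiv'_succAbove]
      have h2 := congrFun hσ' i
      simp only [Function.comp_apply] at h2 ⊢
      simp only [Equiv.trans_apply, h1, Equiv.optionCongr_apply, Option.map_some,
        finSuccEquiv'_symm_some]
      exact h2

/-- Every multiset of cardinality `n` is enumerated by some tuple. -/
lemma exists_ofFn_eq {X : Type*} {n : ℕ} (m : Multiset X) (h : Multiset.card m = n) :
    ∃ x : Fin n → X, m = (List.ofFn x : Multiset X) := by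
  induction m using Quotient.inductionOn with
  | h l =>
    simp only [Multiset.quot_mk_to_coe, Multiset.coe_card] at h
    subst h
    exact ⟨l.get, by rw [List.ofFn_get]; rfl⟩

/-- **Multisets of cardinality `n` are the `n`-th equalizer symmetric power in `Rel`.**
The relation `ε_n` equalizes all permutation relations on `X^n`, and every relation
`S ⊆ Z × X^n` equalizing all permutations factors uniquely through `ε_n`. -/
theorem multiset_equalizer_symmetric_power_in_Rel (X : Type*) (n : ℕ) :
    (∀ τ : Equiv.Perm (Fin n), relComp (epsRel X n) (permRel τ) = epsRel X n) ∧
    (∀ (Z : Type) (S : Z → (Fin n → X) → Prop),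
      (∀ τ : Equiv.Perm (Fin n), relComp S (permRel τ) = S) →
      ∃! T : Z → {m : Multiset X // Multiset.card m = n} → Prop,
        relComp T (epsRel X n) = S) := by
  constructor
  · intro τ
    funext m y
    apply propext
    constructor
    · rintro ⟨x, hx, hy⟩
      rw [epsRel] at hx ⊢
      rw [hx, hy, multiset_ofFn_comp_perm]
    · intro hy
      refine ⟨y ∘ τ, ?_, ?_⟩
      · rw [epsRel] at hy ⊢
        rw [hy, multiset_ofFn_comp_perm]
      · funext i
        simp [permRel]
    -- done
  · intro Z S hS
    -- S is invariant under all permutations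
    have hinv : ∀ (z : Z) (x : Fin n → X) (σ : Equiv.Perm (Fin n)), S z x → S z (x ∘ σ) := by
      intro z x σ hx
      have := hS σ⁻¹
      rw [← this]
      exact ⟨x, hx, by simp [permRel]⟩
    have hcongr : ∀ (z : Z) (x y : Fin n → X),
        (List.ofFn x : Multiset X) = (List.ofFn y : Multiset X) → S z x → S z y := by
      intro z x y hxy hx
      obtain ⟨σ, hσ⟩ := exists_perm_of_multiset_eq y x hxy.symm
      rw [hσ]
      exact hinv z x σ hx
    refine ⟨fun z m => ∃ x, epsRel X n m x ∧ S z x, ?_, ?_⟩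
    · funext z x
      apply propext
      constructor
      · rintro ⟨m, ⟨x', hm', hx'⟩, hm⟩
        rw [epsRel] at hm' hm
        exact hcongr z x' x (hm'.symm.trans hm) hx'
      · intro hx
        exact ⟨⟨(List.ofFn x : Multiset X), by simp⟩, ⟨x, rfl, hx⟩, rfl⟩
    · intro T' hT'
      funext z m
      apply propext
      obtain ⟨ms, hms⟩ := m
      obtain ⟨x, hx⟩ := exists_ofFn_eq ms hms
      have key : T' z ⟨ms, hms⟩ ↔ S z x := by
        rw [← hT']
        constructor
        · intro h
          exact ⟨⟨ms, hms⟩, h, hx⟩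
        · rintro ⟨m', hm', hem⟩
          have : m' = ⟨ms, hms⟩ := by
            apply Subtype.ext
            rw [epsRel] at hem
            exact hem.trans hx.symm
          rwa [this] at hm'
      rw [key]
      constructor
      · intro h
        exact ⟨x, hx, h⟩
      · rintro ⟨x', hx', hSx'⟩
        rw [epsRel] at hx'
        exact hcongr z x' x
          ((show (ms : Multiset X) = (List.ofFn x' : Multiset X) from hx').symm.trans hx) hSx'
end
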